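/- Let A be a tristochastic n × n × n array with exactly two entries equal to 1/2 in every line and all other entries zero, and define the graph G(A) on supp(A) joining two support elements when they share a line. If some connected component of G(A) is bipartite, then A is not a vertex of the polytope of tristochastic arrays: there exist distinct tristochastic arrays X, Y with A = (X+Y)/2. -/

import Mathlib

def Tristochastic {n : ℕ} (A : Fin n → Fin n → Fin n → ℝ) : Prop :=
  (∀ i j k, 0 ≤ A i j k) ∧
  (∀ i j, ∑ k, A i j k = 1) ∧
  (∀ i k, ∑ j, A i j k = 1) ∧
  (∀ j k, ∑ i, A i j k = 1)

def lineGraph {n : ℕ} (A : Fin n → Fin n → Fin n → ℝ) :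
    SimpleGraph {x : Fin n × Fin n × Fin n // A x.1 x.2.1 x.2.2 ≠ 0} where
  Adj x y := x ≠ y ∧
    ((x.1.1 = y.1.1 ∧ x.1.2.1 = y.1.2.1) ∨
     (x.1.1 = y.1.1 ∧ x.1.2.2 = y.1.2.2) ∨
     (x.1.2.1 = y.1.2.1 ∧ x.1.2.2 = y.1.2.2))
  symm := by
    constructor
    rintro x y ⟨hxy, h⟩
    refine ⟨hxy.symm, ?_⟩
    rcases h with ⟨h1, h2⟩ | ⟨h1, h2⟩ | ⟨h1, h2⟩
    · exact Or.inl ⟨h1.symm, h2.symm⟩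
    · exact Or.inr (Or.inl ⟨h1.symm, h2.symm⟩)
    · exact Or.inr (Or.inr ⟨h1.symm, h2.symm⟩)
  loopless := by constructor; rintro x ⟨hx, -⟩; exact hx rfl

open Classical in
noncomputable def delta {n : ℕ} (A : Fin n → Fin n → Fin n → ℝ)
    (c : (lineGraph A).ConnectedComponent)
    (col : (SimpleGraph.induce {v | (lineGraph A).connectedComponentMk v = c}
        (lineGraph A)).Coloring (Fin 2)) : Fin n → Fin n → Fin n → ℝ :=
  fun i j k =>
    if h : A i j k ≠ 0 then
      if hc : (lineGraph A).connectedComponentMk ⟨(i, j, k), h⟩ = c then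
        (if col ⟨⟨(i, j, k), h⟩, hc⟩ = 0 then 1 else -1)
      else 0
    else 0

lemma delta_zero {n : ℕ} (A : Fin n → Fin n → Fin n → ℝ)
    (c : (lineGraph A).ConnectedComponent)
    (col : (SimpleGraph.induce {v | (lineGraph A).connectedComponentMk v = c}
        (lineGraph A)).Coloring (Fin 2)) {i j k : Fin n} (h : A i j k = 0) :
    delta A c col i j k = 0 := by
  rw [delta, dif_neg (by simpa using h)]

lemma delta_mem {n : ℕ} (A : Fin n → Fin n → Fin n → ℝ)
    (c : (lineGraph A).ConnectedComponent)
    (col : (SimpleGraph.induce {v | (lineGraph A).connectedComponentMk v = c}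
        (lineGraph A)).Coloring (Fin 2)) (i j k : Fin n) :
    delta A c col i j k = 1 ∨ delta A c col i j k = -1 ∨ delta A c col i j k = 0 := by
  rw [delta]
  split_ifs <;> simp

lemma delta_pair {n : ℕ} (A : Fin n → Fin n → Fin n → ℝ)
    (c : (lineGraph A).ConnectedComponent)
    (col : (SimpleGraph.induce {v | (lineGraph A).connectedComponentMk v = c}
        (lineGraph A)).Coloring (Fin 2)) {i j k i' j' k' : Fin n}
    (hx : A i j k ≠ 0) (hy : A i' j' k' ≠ 0)
    (hadj : (lineGraph A).Adj ⟨(i, j, k), hx⟩ ⟨(i', j', k'), hy⟩) :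
    delta A c col i j k + delta A c col i' j' k' = 0 := by
  rw [delta, delta, dif_pos hx, dif_pos hy]
  have hmk : (lineGraph A).connectedComponentMk ⟨(i, j, k), hx⟩ =
      (lineGraph A).connectedComponentMk ⟨(i', j', k'), hy⟩ :=
    SimpleGraph.ConnectedComponent.sound hadj.reachable
  by_cases hc : (lineGraph A).connectedComponentMk ⟨(i, j, k), hx⟩ = c
  · have hc' : (lineGraph A).connectedComponentMk ⟨(i', j', k'), hy⟩ = c := hmk ▸ hc
    rw [dif_pos hc, dif_pos hc']
    have hcol : col ⟨⟨(i, j, k), hx⟩, hc⟩ ≠ col ⟨⟨(i', j', k'), hy⟩, hc'⟩ := col.valid hadj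
    have key : ∀ a b : Fin 2, a ≠ b → (a = 0 ∧ ¬ b = 0) ∨ (¬ a = 0 ∧ b = 0) := by decide
    rcases key _ _ hcol with ⟨h1, h2⟩ | ⟨h1, h2⟩
    · rw [if_pos h1, if_neg h2]; ring
    · rw [if_neg h1, if_pos h2]; ring
  · have hc' : ¬ (lineGraph A).connectedComponentMk ⟨(i', j', k'), hy⟩ = c :=
      fun h => hc (hmk.trans h)
    rw [dif_neg hc, dif_neg hc']; ring


/-- If `A` is tristochastic with exactly two entries equal to `1/2` in every line and
all other entries zero, and some connected component of `G(A)` is bipartite, then `A`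
is not a vertex: it is the midpoint of two distinct tristochastic arrays. -/
theorem stmt4 {n : ℕ} (A : Fin n → Fin n → Fin n → ℝ)
    (hA : Tristochastic A)
    (hzero : ∀ i j k, A i j k ≠ 1 / 2 → A i j k = 0)
    (htwo1 : ∀ i j, (Finset.univ.filter fun k => A i j k = 1 / 2).card = 2)
    (htwo2 : ∀ i k, (Finset.univ.filter fun j => A i j k = 1 / 2).card = 2)
    (htwo3 : ∀ j k, (Finset.univ.filter fun i => A i j k = 1 / 2).card = 2)
    (hbip : ∃ c : (lineGraph A).ConnectedComponent,
      (SimpleGraph.induce {v | (lineGraph A).connectedComponentMk v = c}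
        (lineGraph A)).Colorable 2) :
    ∃ X Y : Fin n → Fin n → Fin n → ℝ, Tristochastic X ∧ Tristochastic Y ∧ X ≠ Y ∧
      ∀ i j k, A i j k = (X i j k + Y i j k) / 2 := by
  obtain ⟨c, ⟨col⟩⟩ := hbip
  set D := delta A c col with hD
  -- entries of D vanish off the support
  have hDzero : ∀ i j k, A i j k = 0 → D i j k = 0 := fun i j k h => delta_zero A c col h
  -- line sums of D are zero
  have hsum1 : ∀ i j, ∑ k, D i j k = 0 := by
    intro i j
    obtain ⟨k₁, k₂, hkne, hS⟩ := Finset.card_eq_two.mp (htwo1 i j)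
    have hm1 : k₁ ∈ Finset.univ.filter fun k => A i j k = 1 / 2 := by rw [hS]; simp
    have hm2 : k₂ ∈ Finset.univ.filter fun k => A i j k = 1 / 2 := by rw [hS]; simp
    have h1 : A i j k₁ = 1 / 2 := (Finset.mem_filter.mp hm1).2
    have h2 : A i j k₂ = 1 / 2 := (Finset.mem_filter.mp hm2).2
    have hx : A i j k₁ ≠ 0 := by rw [h1]; norm_num
    have hy : A i j k₂ ≠ 0 := by rw [h2]; norm_num
    rw [← Finset.sum_subset (Finset.subset_univ
        (Finset.univ.filter fun k => A i j k = 1 / 2))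
      (fun k _ hk => hDzero i j k (hzero i j k (by simpa using hk)))]
    rw [hS, Finset.sum_pair hkne]
    exact delta_pair A c col hx hy
      ⟨fun h => hkne (congrArg (fun v => v.1.2.2) h), Or.inl ⟨rfl, rfl⟩⟩
  have hsum2 : ∀ i k, ∑ j, D i j k = 0 := by
    intro i k
    obtain ⟨j₁, j₂, hjne, hS⟩ := Finset.card_eq_two.mp (htwo2 i k)
    have hm1 : j₁ ∈ Finset.univ.filter fun j => A i j k = 1 / 2 := by rw [hS]; simp
    have hm2 : j₂ ∈ Finset.univ.filter fun j => A i j k = 1 / 2 := by rw [hS]; simp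
    have h1 : A i j₁ k = 1 / 2 := (Finset.mem_filter.mp hm1).2
    have h2 : A i j₂ k = 1 / 2 := (Finset.mem_filter.mp hm2).2
    have hx : A i j₁ k ≠ 0 := by rw [h1]; norm_num
    have hy : A i j₂ k ≠ 0 := by rw [h2]; norm_num
    rw [← Finset.sum_subset (Finset.subset_univ
        (Finset.univ.filter fun j => A i j k = 1 / 2))
      (fun j _ hj => hDzero i j k (hzero i j k (by simpa using hj)))]
    rw [hS, Finset.sum_pair hjne]
    exact delta_pair A c col hx hy
      ⟨fun h => hjne (congrArg (fun v => v.1.2.1) h), Or.inr (Or.inl ⟨rfl, rfl⟩)⟩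
  have hsum3 : ∀ j k, ∑ i, D i j k = 0 := by
    intro j k
    obtain ⟨i₁, i₂, hine, hS⟩ := Finset.card_eq_two.mp (htwo3 j k)
    have hm1 : i₁ ∈ Finset.univ.filter fun i => A i j k = 1 / 2 := by rw [hS]; simp
    have hm2 : i₂ ∈ Finset.univ.filter fun i => A i j k = 1 / 2 := by rw [hS]; simp
    have h1 : A i₁ j k = 1 / 2 := (Finset.mem_filter.mp hm1).2
    have h2 : A i₂ j k = 1 / 2 := (Finset.mem_filter.mp hm2).2
    have hx : A i₁ j k ≠ 0 := by rw [h1]; norm_num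
    have hy : A i₂ j k ≠ 0 := by rw [h2]; norm_num
    rw [← Finset.sum_subset (Finset.subset_univ
        (Finset.univ.filter fun i => A i j k = 1 / 2))
      (fun i _ hi => hDzero i j k (hzero i j k (by simpa using hi)))]
    rw [hS, Finset.sum_pair hine]
    exact delta_pair A c col hx hy
      ⟨fun h => hine (congrArg (fun v => v.1.1) h), Or.inr (Or.inr ⟨rfl, rfl⟩)⟩
  -- nonnegativity bound
  have hnonneg : ∀ i j k, |D i j k| / 2 ≤ A i j k := by
    intro i j k
    by_cases h : A i j k = 0
    · rw [hDzero i j k h, h]; norm_num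
    · have hA2 : A i j k = 1 / 2 := by
        by_contra hne; exact h (hzero i j k hne)
      rcases delta_mem A c col i j k with h1 | h1 | h1 <;> rw [hA2, hD, h1] <;> norm_num
  refine ⟨fun i j k => A i j k + D i j k / 2, fun i j k => A i j k - D i j k / 2,
    ⟨?_, ?_, ?_, ?_⟩, ⟨?_, ?_, ?_, ?_⟩, ?_, ?_⟩
  · intro i j k
    have := hnonneg i j k
    have h2 := neg_abs_le (D i j k)
    linarith
  · intro i j
    rw [Finset.sum_add_distrib, ← Finset.sum_div, hsum1 i j, hA.2.1 i j]; norm_num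
  · intro i k
    rw [Finset.sum_add_distrib, ← Finset.sum_div, hsum2 i k, hA.2.2.1 i k]; norm_num
  · intro j k
    rw [Finset.sum_add_distrib, ← Finset.sum_div, hsum3 j k, hA.2.2.2 j k]; norm_num
  · intro i j k
    have := hnonneg i j k
    have h2 := le_abs_self (D i j k)
    linarith
  · intro i j
    rw [Finset.sum_sub_distrib, ← Finset.sum_div, hsum1 i j, hA.2.1 i j]; norm_num
  · intro i k
    rw [Finset.sum_sub_distrib, ← Finset.sum_div, hsum2 i k, hA.2.2.1 i k]; norm_num
  · intro j k
    rw [Finset.sum_sub_distrib, ← Finset.sum_div, hsum3 j k, hA.2.2.2 j k]; norm_num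
  · -- X ≠ Y
    obtain ⟨v, hv⟩ := c.exists_rep
    have hvmk : (lineGraph A).connectedComponentMk v = c := hv
    have hDv : D v.1.1 v.1.2.1 v.1.2.2 ≠ 0 := by
      rw [hD, delta, dif_pos v.2, dif_pos hvmk]
      split_ifs <;> norm_num
    intro heq
    have := congrFun (congrFun (congrFun heq v.1.1) v.1.2.1) v.1.2.2
    exact hDv (by linarith [this] )
  · intro i j k; ring
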